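/- arXiv:1912.11857 — 2 statements merged into one kernel-verified Lean document; each statement's English description precedes it below -/
import Mathlib

section
/- Let c₁,c₂,c₃,c₄ be nonzero integers. For every ε>0 there exists a constant C>0 (depending only on c₁,…,c₄ and ε) such that for all real B ≥ 1, the number of x=(x₁,…,x₄)∈ℤ⁴ with max|xᵢ| ≤ B and c₁x₁²+c₂x₂²+c₃x₃²+c₄x₄²=0 is at most C·B^{2+ε}. -/
open Finset

lemma tau_bound (ε : ℝ) (hε : 0 < ε) :
    ∃ C : ℝ, 1 ≤ C ∧ ∀ n : ℕ, n ≠ 0 → ((n.divisors.card : ℝ)) ≤ C * (n : ℝ) ^ ε := by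
  set t : ℝ := ε * Real.log 2 with ht
  have ht0 : 0 < t := mul_pos hε (Real.log_pos (by norm_num))
  set K : ℝ := Real.exp t / t with hK
  have hK1 : 1 ≤ K := by
    rw [hK, le_div_iff₀ ht0, one_mul]
    have := Real.add_one_le_exp t
    linarith
  set P : ℕ := ⌈(2:ℝ) ^ (1/ε)⌉₊ with hP
  refine ⟨K ^ P, one_le_pow₀ hK1, ?_⟩
  intro n hn
  -- key pointwise bound
  have key : ∀ p ∈ n.primeFactors, ((n.factorization p + 1 : ℕ) : ℝ) ≤
      (if p < P then K else 1) * ((p : ℝ) ^ (n.factorization p : ℕ)) ^ ε := by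
    intro p hp
    have hp2 : 2 ≤ p := (Nat.prime_of_mem_primeFactors hp).two_le
    set a : ℕ := n.factorization p with ha
    have hpR : (2:ℝ) ≤ (p:ℝ) := by exact_mod_cast hp2
    have hppos : (0:ℝ) < (p:ℝ) := by linarith
    have hbase : ((p:ℝ) ^ a) ^ ε = Real.exp (ε * (a * Real.log p)) := by
      rw [← Real.rpow_natCast (p:ℝ) a, ← Real.rpow_mul (le_of_lt hppos),
        Real.rpow_def_of_pos hppos]
      ring_nf
    by_cases hcase : p < P
    · -- small prime: (a+1) ≤ K * 2^{aε} ≤ K * p^{aε}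
      rw [if_pos hcase]
      have h1 : ((a+1 : ℕ) : ℝ) ≤ K * Real.exp (t * a) := by
        have h2 : t * (a+1) ≤ Real.exp (t * (a+1)) := (Real.add_one_le_exp _).trans' (by linarith)
        have h3 : ((a+1:ℕ):ℝ) ≤ Real.exp (t * (a+1)) / t := by
          rw [le_div_iff₀ ht0]
          push_cast
          calc ((a:ℝ)+1) * t = t * ((a:ℝ)+1) := by ring
            _ ≤ Real.exp (t * ((a:ℝ)+1)) := Real.add_one_le_exp _ |>.trans' (by nlinarith [Real.add_one_le_exp (t * ((a:ℝ)+1))])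
        calc ((a+1:ℕ):ℝ) ≤ Real.exp (t * (a+1)) / t := h3
          _ = (Real.exp t / t) * Real.exp (t * a) := by
              rw [mul_add, Real.exp_add, mul_one]; ring
      refine h1.trans ?_
      have : Real.exp (t * a) ≤ Real.exp (ε * (a * Real.log p)) := by
        apply Real.exp_le_exp.2
        rw [ht]
        have hlog : Real.log 2 ≤ Real.log p := Real.log_le_log (by norm_num) hpR
        have : (0:ℝ) ≤ a := Nat.cast_nonneg a
        have hh := mul_le_mul_of_nonneg_left hlog (mul_nonneg hε.le this)
        nlinarith [hh]
      rw [hbase]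
      exact mul_le_mul_of_nonneg_left this (by linarith)
    · -- large prime: p ≥ P so p^ε ≥ 2, (a+1) ≤ 2^a ≤ (p^ε)^a
      rw [if_neg hcase, one_mul, hbase]
      have hpP : (2:ℝ) ^ (1/ε) ≤ (p:ℝ) := by
        have : ((P:ℕ):ℝ) ≤ (p:ℝ) := by exact_mod_cast Nat.le_of_not_lt hcase
        exact (Nat.le_ceil _).trans this
      have h2p : Real.log 2 ≤ ε * Real.log p := by
        have := Real.log_le_log (Real.rpow_pos_of_pos (by norm_num) _) hpP
        rw [Real.log_rpow (by norm_num)] at this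
        calc Real.log 2 = ε * (1/ε * Real.log 2) := by field_simp
          _ ≤ ε * Real.log p := by
              apply mul_le_mul_of_nonneg_left _ hε.le
              linarith
      have h2a : ((a+1:ℕ):ℝ) ≤ 2 ^ a := by
        have : a + 1 ≤ 2 ^ a := Nat.lt_two_pow_self (n := a)
        exact_mod_cast this
      refine h2a.trans ?_
      have : (2:ℝ) ^ a = Real.exp (a * Real.log 2) := by
        rw [← Real.exp_log (show (0:ℝ) < 2 ^ a by positivity), Real.log_pow]
      rw [this]
      apply Real.exp_le_exp.2
      have : (0:ℝ) ≤ a := Nat.cast_nonneg a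
      nlinarith
  -- assemble
  have hcard : ((n.divisors.card : ℕ) : ℝ) = ∏ p ∈ n.primeFactors, ((n.factorization p + 1 : ℕ) : ℝ) := by
    rw [Nat.card_divisors hn]; push_cast; rfl
  rw [hcard]
  have step1 : ∏ p ∈ n.primeFactors, ((n.factorization p + 1 : ℕ) : ℝ) ≤
      ∏ p ∈ n.primeFactors, (if p < P then K else 1) * ((p : ℝ) ^ (n.factorization p : ℕ)) ^ ε := by
    apply Finset.prod_le_prod (fun p _ => by positivity) key
  refine step1.trans ?_
  rw [Finset.prod_mul_distrib]
  have hnprod : ∏ p ∈ n.primeFactors, ((p : ℝ) ^ (n.factorization p : ℕ)) ^ ε = ((n:ℝ)) ^ ε := by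
    rw [Real.finset_prod_rpow _ _ (fun p _ => by positivity)]
    congr 1
    have hnn : (∏ p ∈ n.primeFactors, p ^ n.factorization p : ℕ) = n := by
      rw [← Nat.prod_factorization_eq_prod_primeFactors]
      exact Nat.factorization_prod_pow_eq_self hn
    conv_rhs => rw [← hnn]
    push_cast
    rfl
  rw [hnprod]
  apply mul_le_mul_of_nonneg_right _ (Real.rpow_nonneg (Nat.cast_nonneg n) ε)
  -- ∏ (if p < P then K else 1) ≤ K ^ P
  calc ∏ p ∈ n.primeFactors, (if p < P then K else 1)
      = ∏ p ∈ n.primeFactors.filter (· < P), K := (Finset.prod_filter _ _).symm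
    _ = K ^ (n.primeFactors.filter (· < P)).card := Finset.prod_const K
    _ ≤ K ^ P := by
        apply pow_le_pow_right₀ hK1
        calc (n.primeFactors.filter (· < P)).card ≤ (Finset.range P).card := by
              apply Finset.card_le_card
              intro p hp
              simp only [Finset.mem_filter] at hp
              exact Finset.mem_range.2 hp.2
          _ = P := Finset.card_range P

lemma sq_cases {a b : ℤ} (h : b ^ 2 = a ^ 2) : b = a ∨ b = -a := by
  have h2 : (b - a) * (b + a) = 0 := by ring_nf; linarith
  rcases mul_eq_zero.1 h2 with h3 | h3
  · left; omega
  · right; omega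

lemma V_card (n : ℕ) :
    (((Finset.Icc (-(n:ℤ)) (n:ℤ)) ×ˢ (Finset.Icc (-(n:ℤ)) (n:ℤ))).filter
      (fun r : ℤ × ℤ => r.2 ^ 2 = r.1 ^ 2)).card ≤ 2 * (2 * n + 1) := by
  set I := Finset.Icc (-(n:ℤ)) (n:ℤ) with hI
  have hIcard : I.card = 2 * n + 1 := by
    rw [hI, Int.card_Icc]
    omega
  set V := (I ×ˢ I).filter (fun r : ℤ × ℤ => r.2 ^ 2 = r.1 ^ 2) with hV
  have h1 : V.card ≤ 2 * (V.image Prod.fst).card := by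
    apply Finset.card_le_mul_card_image
    intro b _
    have hsub : V.filter (fun r => r.1 = b) ⊆ ({(b, b), (b, -b)} : Finset (ℤ × ℤ)) := by
      intro r hr
      simp only [hV, Finset.mem_filter] at hr
      obtain ⟨⟨_, hsq⟩, hfst⟩ := hr
      rcases sq_cases hsq with h | h
      · simp [Finset.mem_insert]
        left
        rcases r with ⟨r1, r2⟩
        simp_all
      · simp [Finset.mem_insert]
        right
        rcases r with ⟨r1, r2⟩
        simp_all
    calc (V.filter (fun r => r.1 = b)).card ≤ ({(b, b), (b, -b)} : Finset (ℤ × ℤ)).card :=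
          Finset.card_le_card hsub
      _ ≤ 2 := Finset.card_insert_le _ _ |>.trans (by simp)
  have h2 : (V.image Prod.fst).card ≤ I.card := by
    apply Finset.card_le_card
    intro b hb
    simp only [Finset.mem_image] at hb
    obtain ⟨r, hr, hrb⟩ := hb
    simp only [hV, Finset.mem_filter, Finset.mem_product] at hr
    rw [← hrb]; exact hr.1.1
  calc V.card ≤ 2 * (V.image Prod.fst).card := h1
    _ ≤ 2 * I.card := by omega
    _ = 2 * (2 * n + 1) := by rw [hIcard]

set_option maxHeartbeats 1000000 in
lemma pair_count (d e : ℤ) (hd : d ≠ 0) (he : e ≠ 0) (δ C₀ : ℝ) (hδ : 0 < δ) (hC₀ : 1 ≤ C₀)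
    (hτ : ∀ m : ℕ, m ≠ 0 → ((m.divisors.card : ℝ)) ≤ C₀ * (m : ℝ) ^ δ) (n : ℕ) :
    (((((Finset.Icc (-(n:ℤ)) (n:ℤ)) ×ˢ (Finset.Icc (-(n:ℤ)) (n:ℤ))) ×ˢ
        ((Finset.Icc (-(n:ℤ)) (n:ℤ)) ×ˢ (Finset.Icc (-(n:ℤ)) (n:ℤ)))).filter
      (fun p => d * p.1.1 ^ 2 + e * p.1.2 ^ 2 = d * p.2.1 ^ 2 + e * p.2.2 ^ 2)).card : ℝ)
      ≤ (2 * (2 * (n:ℝ) + 1)) ^ 2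
        + (2 * (n:ℝ) + 1) ^ 2 * (2 * C₀ * ((d.natAbs : ℝ) * (n:ℝ) ^ 2) ^ δ) := by
  set I := Finset.Icc (-(n:ℤ)) (n:ℤ) with hI
  have hIcard : I.card = 2 * n + 1 := by rw [hI, Int.card_Icc]; omega
  set U := ((I ×ˢ I) ×ˢ (I ×ˢ I)).filter
      (fun p => d * p.1.1 ^ 2 + e * p.1.2 ^ 2 = d * p.2.1 ^ 2 + e * p.2.2 ^ 2) with hU
  set V := (I ×ˢ I).filter (fun r : ℤ × ℤ => r.2 ^ 2 = r.1 ^ 2) with hV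
  have hVc : V.card ≤ 2 * (2 * n + 1) := V_card n
  have hmaps : ∀ p ∈ U, ((p.1.1, p.2.1) : ℤ × ℤ) ∈ I ×ˢ I := by
    intro p hp
    simp only [hU, Finset.mem_filter, Finset.mem_product] at hp ⊢
    exact ⟨hp.1.1.1, hp.1.2.1⟩
  have hsum : U.card = ∑ q ∈ I ×ˢ I, (U.filter (fun p => (p.1.1, p.2.1) = q)).card :=
    Finset.card_eq_sum_card_fiberwise hmaps
  -- bound each fiber
  -- Case A : q.2^2 = q.1^2
  have hcaseA : ∀ q ∈ (I ×ˢ I).filter (fun q : ℤ × ℤ => q.2 ^ 2 = q.1 ^ 2),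
      (U.filter (fun p => (p.1.1, p.2.1) = q)).card ≤ V.card := by
    intro q hq
    simp only [Finset.mem_filter] at hq
    apply Finset.card_le_card_of_injOn (fun p => (p.1.2, p.2.2))
    · intro p hp
      simp only [Finset.mem_coe, hU, Finset.mem_filter, Finset.mem_product, Prod.ext_iff] at hp
      obtain ⟨⟨⟨⟨_, hb⟩, ⟨_, hb'⟩⟩, heq⟩, h1, h2⟩ := hp
      simp only [Finset.mem_coe, hV, Finset.mem_filter, Finset.mem_product]
      refine ⟨⟨hb, hb'⟩, ?_⟩
      have hq2 : q.2 ^ 2 = q.1 ^ 2 := hq.2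
      have : e * p.2.2 ^ 2 = e * p.1.2 ^ 2 := by
        rw [← h1, ← h2] at hq2
        linear_combination -heq - d * hq2
      exact mul_left_cancel₀ he this
    · intro p hp p' hp' hEq
      simp only [Finset.coe_filter, Set.mem_setOf_eq, Prod.ext_iff] at hp hp'
      obtain ⟨-, h1, h2⟩ := hp
      obtain ⟨-, h1', h2'⟩ := hp'
      simp only [Prod.ext_iff] at hEq
      rcases p with ⟨⟨a, b⟩, ⟨a', b'⟩⟩
      rcases p' with ⟨⟨c, f⟩, ⟨c', f'⟩⟩
      simp_all
  -- Case B : q.2^2 ≠ q.1^2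
  have hcaseB : ∀ q ∈ (I ×ˢ I).filter (fun q : ℤ × ℤ => ¬ q.2 ^ 2 = q.1 ^ 2),
      ((U.filter (fun p => (p.1.1, p.2.1) = q)).card : ℝ)
        ≤ 2 * C₀ * ((d.natAbs : ℝ) * (n:ℝ) ^ 2) ^ δ := by
    intro q hq
    simp only [Finset.mem_filter, Finset.mem_product] at hq
    obtain ⟨⟨hq1, hq2⟩, hqne⟩ := hq
    set s : ℤ := d * (q.1 ^ 2 - q.2 ^ 2) with hs
    have hsne : s ≠ 0 := by
      simp only [hs, mul_ne_zero_iff]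
      exact ⟨hd, sub_ne_zero.2 (fun hh => hqne hh.symm)⟩
    set D : Finset ℤ := (s.natAbs.divisors.image (Nat.cast : ℕ → ℤ)) ∪
        (s.natAbs.divisors.image (fun m : ℕ => -(m : ℤ))) with hD
    have hfib : (U.filter (fun p => (p.1.1, p.2.1) = q)).card ≤ D.card := by
      apply Finset.card_le_card_of_injOn (fun p => p.2.2 - p.1.2)
      · intro p hp
        simp only [Finset.mem_coe, hU, Finset.mem_filter, Prod.ext_iff] at hp
        obtain ⟨⟨-, heq⟩, h1, h2⟩ := hp
        set u : ℤ := p.2.2 - p.1.2 with hu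
        have hus : u * (e * (p.2.2 + p.1.2)) = s := by
          rw [hs, ← h1, ← h2]
          linear_combination -heq
        have hune : u ≠ 0 := by
          intro h0
          rw [h0, zero_mul] at hus
          exact hsne hus.symm
        have hdvd : u ∣ s := ⟨e * (p.2.2 + p.1.2), hus.symm⟩
        have hmem : u.natAbs ∈ s.natAbs.divisors :=
          Nat.mem_divisors.2 ⟨Int.natAbs_dvd_natAbs.2 hdvd, Int.natAbs_ne_zero.2 hsne⟩
        simp only [Finset.mem_coe, hD, Finset.mem_union, Finset.mem_image]
        rcases Int.natAbs_eq u with h | h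
        · exact Or.inl ⟨u.natAbs, hmem, h.symm⟩
        · exact Or.inr ⟨u.natAbs, hmem, h.symm⟩
      · rintro ⟨⟨a, b⟩, ⟨a', b'⟩⟩ hp ⟨⟨g, f⟩, ⟨g', f'⟩⟩ hp' hEq
        simp only [Finset.coe_filter, hU, Finset.mem_filter, Set.mem_setOf_eq,
          Prod.ext_iff] at hp hp'
        obtain ⟨⟨-, heq⟩, h1, h2⟩ := hp
        obtain ⟨⟨-, heq'⟩, h1', h2'⟩ := hp'
        simp only at hEq h1 h2 h1' h2' heq heq'
        have hus : (b' - b) * (e * (b' + b)) = s := by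
          rw [hs, ← h1, ← h2]
          linear_combination -heq
        have hus' : (f' - f) * (e * (f' + f)) = s := by
          rw [hs, ← h1', ← h2']
          linear_combination -heq'
        have hune : b' - b ≠ 0 := by
          intro h0; rw [h0, zero_mul] at hus; exact hsne hus.symm
        rw [← hEq] at hus'
        have hsum2 : e * (b' + b) = e * (f' + f) :=
          mul_left_cancel₀ hune (hus.trans hus'.symm)
        have hsum3 : b' + b = f' + f := mul_left_cancel₀ he hsum2
        have hb : b = f := by omega
        have hb' : b' = f' := by omega
        simp_all
    have hDcard : (D.card : ℝ) ≤ 2 * (s.natAbs.divisors.card : ℝ) := by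
      have := Finset.card_union_le (s.natAbs.divisors.image (Nat.cast : ℕ → ℤ))
        (s.natAbs.divisors.image (fun m : ℕ => -(m : ℤ)))
      have h1 : (s.natAbs.divisors.image (Nat.cast : ℕ → ℤ)).card ≤ s.natAbs.divisors.card :=
        Finset.card_image_le
      have h2 : (s.natAbs.divisors.image (fun m : ℕ => -(m : ℤ))).card ≤ s.natAbs.divisors.card :=
        Finset.card_image_le
      have : D.card ≤ 2 * s.natAbs.divisors.card := by
        rw [hD]; omega
      exact_mod_cast this
    have hsabs : ((s.natAbs : ℕ) : ℝ) ≤ (d.natAbs : ℝ) * (n:ℝ) ^ 2 := by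
      have hq1' : q.1 ^ 2 ≤ (n:ℤ) ^ 2 := by
        rw [hI, Finset.mem_Icc] at hq1
        nlinarith [hq1.1, hq1.2]
      have hq2' : q.2 ^ 2 ≤ (n:ℤ) ^ 2 := by
        rw [hI, Finset.mem_Icc] at hq2
        nlinarith [hq2.1, hq2.2]
      have habs : ((q.1 ^ 2 - q.2 ^ 2).natAbs : ℤ) ≤ (n:ℤ) ^ 2 := by
        have h1 : (0:ℤ) ≤ q.1 ^ 2 := sq_nonneg _
        have h2 : (0:ℤ) ≤ q.2 ^ 2 := sq_nonneg _
        rw [← Int.abs_eq_natAbs]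
        exact abs_le.2 ⟨by linarith, by linarith⟩
      have : s.natAbs = d.natAbs * (q.1 ^ 2 - q.2 ^ 2).natAbs := by
        rw [hs, Int.natAbs_mul]
      rw [this]
      push_cast
      have : ((q.1 ^ 2 - q.2 ^ 2).natAbs : ℝ) ≤ ((n:ℝ)) ^ 2 := by exact_mod_cast habs
      have hdpos : (0:ℝ) ≤ (d.natAbs : ℝ) := Nat.cast_nonneg _
      nlinarith
    have hτs := hτ s.natAbs (Int.natAbs_ne_zero.2 hsne)
    calc ((U.filter (fun p => (p.1.1, p.2.1) = q)).card : ℝ) ≤ (D.card : ℝ) := by exact_mod_cast hfib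
      _ ≤ 2 * (s.natAbs.divisors.card : ℝ) := hDcard
      _ ≤ 2 * (C₀ * (s.natAbs : ℝ) ^ δ) := by linarith
      _ ≤ 2 * C₀ * ((d.natAbs : ℝ) * (n:ℝ) ^ 2) ^ δ := by
          rw [mul_assoc]
          apply mul_le_mul_of_nonneg_left _ (by norm_num)
          apply mul_le_mul_of_nonneg_left _ (by linarith)
          exact Real.rpow_le_rpow (Nat.cast_nonneg _) hsabs hδ.le
  -- assemble
  rw [hsum]
  push_cast
  rw [← Finset.sum_filter_add_sum_filter_not (I ×ˢ I) (fun q : ℤ × ℤ => q.2 ^ 2 = q.1 ^ 2)]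
  have hA : (∑ q ∈ (I ×ˢ I).filter (fun q : ℤ × ℤ => q.2 ^ 2 = q.1 ^ 2),
      ((U.filter (fun p => (p.1.1, p.2.1) = q)).card : ℝ)) ≤ (2 * (2 * (n:ℝ) + 1)) ^ 2 := by
    have hfilt : (I ×ˢ I).filter (fun q : ℤ × ℤ => q.2 ^ 2 = q.1 ^ 2) = V := rfl
    rw [hfilt]
    calc ∑ q ∈ V, ((U.filter (fun p => (p.1.1, p.2.1) = q)).card : ℝ)
        ≤ ∑ q ∈ V, (V.card : ℝ) := by
          apply Finset.sum_le_sum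
          intro q hq
          exact_mod_cast hcaseA q (hfilt ▸ hq)
      _ = (V.card : ℝ) * (V.card : ℝ) := by rw [Finset.sum_const, nsmul_eq_mul]
      _ ≤ (2 * (2 * (n:ℝ) + 1)) * (2 * (2 * (n:ℝ) + 1)) := by
          have : ((V.card : ℕ) : ℝ) ≤ 2 * (2 * (n:ℝ) + 1) := by exact_mod_cast hVc
          have hnn : (0:ℝ) ≤ (V.card : ℝ) := Nat.cast_nonneg _
          nlinarith
      _ = (2 * (2 * (n:ℝ) + 1)) ^ 2 := by ring
  have hB : (∑ q ∈ (I ×ˢ I).filter (fun q : ℤ × ℤ => ¬ q.2 ^ 2 = q.1 ^ 2),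
      ((U.filter (fun p => (p.1.1, p.2.1) = q)).card : ℝ))
        ≤ (2 * (n:ℝ) + 1) ^ 2 * (2 * C₀ * ((d.natAbs : ℝ) * (n:ℝ) ^ 2) ^ δ) := by
    calc ∑ q ∈ (I ×ˢ I).filter (fun q : ℤ × ℤ => ¬ q.2 ^ 2 = q.1 ^ 2),
        ((U.filter (fun p => (p.1.1, p.2.1) = q)).card : ℝ)
        ≤ ∑ _q ∈ (I ×ˢ I).filter (fun q : ℤ × ℤ => ¬ q.2 ^ 2 = q.1 ^ 2),
          (2 * C₀ * ((d.natAbs : ℝ) * (n:ℝ) ^ 2) ^ δ) := Finset.sum_le_sum hcaseB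
      _ = (((I ×ˢ I).filter (fun q : ℤ × ℤ => ¬ q.2 ^ 2 = q.1 ^ 2)).card : ℝ)
          * (2 * C₀ * ((d.natAbs : ℝ) * (n:ℝ) ^ 2) ^ δ) := by
            rw [Finset.sum_const, nsmul_eq_mul]
      _ ≤ (2 * (n:ℝ) + 1) ^ 2 * (2 * C₀ * ((d.natAbs : ℝ) * (n:ℝ) ^ 2) ^ δ) := by
          apply mul_le_mul_of_nonneg_right
          · have h1 : ((I ×ˢ I).filter (fun q : ℤ × ℤ => ¬ q.2 ^ 2 = q.1 ^ 2)).card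
                ≤ (I ×ˢ I).card := Finset.card_filter_le _ _
            have h2 : (I ×ˢ I).card = (2 * n + 1) * (2 * n + 1) := by
              rw [Finset.card_product, hIcard]
            have : (((I ×ˢ I).filter (fun q : ℤ × ℤ => ¬ q.2 ^ 2 = q.1 ^ 2)).card : ℝ)
                ≤ ((2 * n + 1) * (2 * n + 1) : ℕ) := by exact_mod_cast h1.trans_eq h2
            calc (((I ×ˢ I).filter (fun q : ℤ × ℤ => ¬ q.2 ^ 2 = q.1 ^ 2)).card : ℝ)
                ≤ (((2 * n + 1) * (2 * n + 1) : ℕ) : ℝ) := this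
              _ = (2 * (n:ℝ) + 1) ^ 2 := by push_cast; ring
          · positivity
  linarith


set_option maxHeartbeats 1600000 in
/-- the crude bound `O(B^{2+ε})` for the number of integral zeros, in a box of
side `B`, of a nondegenerate diagonal quaternary quadratic form `c₁x₁²+c₂x₂²+c₃x₃²+c₄x₄²`. -/
theorem stmt_5 (c : Fin 4 → ℤ) (hc : ∀ i, c i ≠ 0) :
    ∀ ε : ℝ, 0 < ε → ∃ C : ℝ, 0 < C ∧ ∀ B : ℝ, 1 ≤ B →
      (Set.ncard {x : Fin 4 → ℤ | (∀ i, ((|x i| : ℤ) : ℝ) ≤ B) ∧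
          (∑ i, c i * x i ^ 2) = 0} : ℝ)
        ≤ C * B ^ ((2 : ℝ) + ε) := by
  intro ε hε
  obtain ⟨C₀, hC₀, hτ⟩ := tau_bound (ε / 2) (by linarith)
  set k₀ : ℝ := (((c 0).natAbs : ℕ) : ℝ) with hk0
  set k₂ : ℝ := (((c 2).natAbs : ℕ) : ℝ) with hk2
  refine ⟨36 + 9 * C₀ * (k₀ ^ (ε / 2) + k₂ ^ (ε / 2)), by positivity, ?_⟩
  intro B hB
  set n : ℕ := ⌊B⌋₊ with hn
  have hB0 : (0:ℝ) < B := by linarith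
  have hnB : (n : ℝ) ≤ B := Nat.floor_le hB0.le
  have hfloor : ((n : ℕ) : ℤ) = ⌊B⌋ := Int.natCast_floor_eq_floor hB0.le
  set I : Finset ℤ := Finset.Icc (-(n:ℤ)) (n:ℤ) with hI
  -- the solution set as a Finset
  set S' : Finset (Fin 4 → ℤ) :=
    (Fintype.piFinset fun _ : Fin 4 => I).filter (fun x => ∑ i, c i * x i ^ 2 = 0) with hS'
  have hset : {x : Fin 4 → ℤ | (∀ i, ((|x i| : ℤ) : ℝ) ≤ B) ∧
      (∑ i, c i * x i ^ 2) = 0} = (↑S' : Set (Fin 4 → ℤ)) := by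
    ext x
    simp only [Set.mem_setOf_eq, hS', Finset.coe_filter, Fintype.mem_piFinset,
      Set.mem_setOf_eq, hI, Finset.mem_Icc]
    constructor
    · rintro ⟨hbox, heq⟩
      refine ⟨fun i => ?_, heq⟩
      have h := Int.le_floor.2 (hbox i)
      rw [← hfloor] at h
      exact abs_le.1 h
    · rintro ⟨hbox, heq⟩
      refine ⟨fun i => ?_, heq⟩
      have h : |x i| ≤ (n:ℤ) := abs_le.2 (hbox i)
      calc ((|x i| : ℤ) : ℝ) ≤ ((n:ℕ) : ℝ) := by exact_mod_cast h
        _ ≤ B := hnB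
  rw [hset, Set.ncard_coe_finset]
  -- inject into a product Finset
  set T : Finset ((ℤ × ℤ) × ℤ × ℤ) := ((I ×ˢ I) ×ˢ (I ×ˢ I)).filter
    (fun p => c 0 * p.1.1 ^ 2 + c 1 * p.1.2 ^ 2 + c 2 * p.2.1 ^ 2 + c 3 * p.2.2 ^ 2 = 0)
    with hT
  have hST : S'.card ≤ T.card := by
    apply Finset.card_le_card_of_injOn (fun x => ((x 0, x 1), (x 2, x 3)))
    · intro x hx
      simp only [Finset.mem_coe, hS', Finset.mem_filter, Fintype.mem_piFinset] at hx
      obtain ⟨hbox, heq⟩ := hx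
      rw [Fin.sum_univ_four] at heq
      simp only [Finset.mem_coe, hT, Finset.mem_filter, Finset.mem_product]
      exact ⟨⟨⟨hbox 0, hbox 1⟩, hbox 2, hbox 3⟩, heq⟩
    · intro x _ y _ hEq
      simp only [Prod.mk.injEq] at hEq
      obtain ⟨⟨h0, h1⟩, h2, h3⟩ := hEq
      funext i
      fin_cases i <;> assumption
  -- fiber decomposition over the value of the first binary form
  set f : (ℤ × ℤ) × ℤ × ℤ → ℤ := fun p => c 0 * p.1.1 ^ 2 + c 1 * p.1.2 ^ 2 with hf
  set M : Finset ℤ := (I ×ˢ I).image (fun r : ℤ × ℤ => c 0 * r.1 ^ 2 + c 1 * r.2 ^ 2) with hM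
  set A : ℤ → Finset (ℤ × ℤ) :=
    fun m => (I ×ˢ I).filter (fun r => c 0 * r.1 ^ 2 + c 1 * r.2 ^ 2 = m) with hA
  set Bt : ℤ → Finset (ℤ × ℤ) :=
    fun m => (I ×ˢ I).filter (fun r => c 2 * r.1 ^ 2 + c 3 * r.2 ^ 2 = -m) with hBt
  have hTmaps : ∀ p ∈ T, f p ∈ M := by
    intro p hp
    simp only [hT, Finset.mem_filter, Finset.mem_product] at hp
    simp only [hM, Finset.mem_image]
    exact ⟨p.1, by simpa [Finset.mem_product] using hp.1.1, rfl⟩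
  have hTsum : T.card = ∑ m ∈ M, (T.filter (fun p => f p = m)).card :=
    Finset.card_eq_sum_card_fiberwise hTmaps
  have hfiber : ∀ m : ℤ, T.filter (fun p => f p = m) = (A m) ×ˢ (Bt m) := by
    intro m
    ext p
    simp only [hT, hf, hA, hBt, Finset.mem_filter, Finset.mem_product]
    constructor
    · rintro ⟨⟨⟨hp1, hp2⟩, heq⟩, hv⟩
      exact ⟨⟨hp1, hv⟩, hp2, by linarith⟩
    · rintro ⟨⟨hp1, hv⟩, hp2, hw⟩
      exact ⟨⟨⟨hp1, hp2⟩, by linarith⟩, hv⟩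
  -- AM-GM
  set U₁ : Finset ((ℤ × ℤ) × ℤ × ℤ) := ((I ×ˢ I) ×ˢ (I ×ˢ I)).filter
    (fun p => c 0 * p.1.1 ^ 2 + c 1 * p.1.2 ^ 2 = c 0 * p.2.1 ^ 2 + c 1 * p.2.2 ^ 2) with hU₁
  set U₂ : Finset ((ℤ × ℤ) × ℤ × ℤ) := ((I ×ˢ I) ×ˢ (I ×ˢ I)).filter
    (fun p => c 2 * p.1.1 ^ 2 + c 3 * p.1.2 ^ 2 = c 2 * p.2.1 ^ 2 + c 3 * p.2.2 ^ 2) with hU₂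
  have hsq1 : ∑ m ∈ M, (A m).card ^ 2 ≤ U₁.card := by
    have hdisj : ∀ m ∈ M, ∀ m' ∈ M, m ≠ m' → Disjoint ((A m) ×ˢ (A m)) ((A m') ×ˢ (A m')) := by
      intro m _ m' _ hne
      rw [Finset.disjoint_left]
      intro q hq hq'
      simp only [hA, Finset.mem_product, Finset.mem_filter] at hq hq'
      exact hne (hq.1.2 ▸ hq'.1.2 ▸ rfl)
    calc ∑ m ∈ M, (A m).card ^ 2 = ∑ m ∈ M, ((A m) ×ˢ (A m)).card := by
          apply Finset.sum_congr rfl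
          intro m _
          rw [Finset.card_product, sq]
      _ = (M.biUnion (fun m => (A m) ×ˢ (A m))).card := (Finset.card_biUnion hdisj).symm
      _ ≤ U₁.card := by
          apply Finset.card_le_card
          intro q hq
          simp only [Finset.mem_biUnion] at hq
          obtain ⟨m, _, hq⟩ := hq
          simp only [hA, Finset.mem_product, Finset.mem_filter] at hq
          simp only [hU₁, Finset.mem_filter, Finset.mem_product]
          exact ⟨⟨hq.1.1, hq.2.1⟩, by rw [hq.1.2, hq.2.2]⟩
  have hsq2 : ∑ m ∈ M, (Bt m).card ^ 2 ≤ U₂.card := by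
    have hdisj : ∀ m ∈ M, ∀ m' ∈ M, m ≠ m' → Disjoint ((Bt m) ×ˢ (Bt m)) ((Bt m') ×ˢ (Bt m')) := by
      intro m _ m' _ hne
      rw [Finset.disjoint_left]
      intro q hq hq'
      simp only [hBt, Finset.mem_product, Finset.mem_filter] at hq hq'
      have := hq.1.2.symm.trans hq'.1.2
      exact hne (by omega)
    calc ∑ m ∈ M, (Bt m).card ^ 2 = ∑ m ∈ M, ((Bt m) ×ˢ (Bt m)).card := by
          apply Finset.sum_congr rfl
          intro m _
          rw [Finset.card_product, sq]
      _ = (M.biUnion (fun m => (Bt m) ×ˢ (Bt m))).card := (Finset.card_biUnion hdisj).symm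
      _ ≤ U₂.card := by
          apply Finset.card_le_card
          intro q hq
          simp only [Finset.mem_biUnion] at hq
          obtain ⟨m, _, hq⟩ := hq
          simp only [hBt, Finset.mem_product, Finset.mem_filter] at hq
          simp only [hU₂, Finset.mem_filter, Finset.mem_product]
          exact ⟨⟨hq.1.1, hq.2.1⟩, by rw [hq.1.2, hq.2.2]⟩
  have h2T : 2 * T.card ≤ U₁.card + U₂.card := by
    calc 2 * T.card = ∑ m ∈ M, 2 * ((A m).card * (Bt m).card) := by
          rw [hTsum, Finset.mul_sum]
          apply Finset.sum_congr rfl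
          intro m _
          rw [hfiber m, Finset.card_product]
      _ ≤ ∑ m ∈ M, ((A m).card ^ 2 + (Bt m).card ^ 2) := by
          apply Finset.sum_le_sum
          intro m _
          calc 2 * ((A m).card * (Bt m).card) = 2 * (A m).card * (Bt m).card :=
              (mul_assoc _ _ _).symm
            _ ≤ (A m).card ^ 2 + (Bt m).card ^ 2 := two_mul_le_add_sq _ _
      _ = ∑ m ∈ M, (A m).card ^ 2 + ∑ m ∈ M, (Bt m).card ^ 2 := Finset.sum_add_distrib
      _ ≤ U₁.card + U₂.card := Nat.add_le_add hsq1 hsq2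
  -- real bounds via pair_count
  have hPC1 := pair_count (c 0) (c 1) (hc 0) (hc 1) (ε/2) C₀ (by linarith) hC₀ hτ n
  have hPC2 := pair_count (c 2) (c 3) (hc 2) (hc 3) (ε/2) C₀ (by linarith) hC₀ hτ n
  rw [← hU₁, ← hk0] at hPC1
  rw [← hU₂, ← hk2] at hPC2
  -- numeric assembly
  have hR : 2 * (n:ℝ) + 1 ≤ 3 * B := by linarith
  have hR0 : (0:ℝ) ≤ 2 * (n:ℝ) + 1 := by positivity
  have hBsq : B ^ (2:ℝ) * B ^ ε = B ^ ((2:ℝ) + ε) := (Real.rpow_add hB0 2 ε).symm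
  have hB2 : ((B:ℝ)) ^ (2:ℝ) = B ^ (2:ℕ) := by
    rw [← Real.rpow_natCast B 2]; norm_num
  have hmono : B ^ (2:ℝ) ≤ B ^ ((2:ℝ) + ε) :=
    Real.rpow_le_rpow_of_exponent_le hB (by linarith)
  have hrp1 : ((k₀ * (n:ℝ) ^ 2) : ℝ) ^ (ε/2) ≤ k₀ ^ (ε/2) * B ^ ε := by
    have h1 : (k₀ * (n:ℝ) ^ 2) ≤ k₀ * B ^ 2 := by
      have : (n:ℝ)^2 ≤ B^2 := by nlinarith
      have hk : (0:ℝ) ≤ k₀ := Nat.cast_nonneg _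
      nlinarith
    calc ((k₀ * (n:ℝ) ^ 2) : ℝ) ^ (ε/2) ≤ (k₀ * B ^ 2) ^ (ε/2) := by
          apply Real.rpow_le_rpow (by positivity) h1 (by linarith)
      _ = k₀ ^ (ε/2) * (B ^ 2) ^ (ε/2) := Real.mul_rpow (Nat.cast_nonneg _) (by positivity)
      _ = k₀ ^ (ε/2) * B ^ ε := by
          congr 1
          rw [← hB2, ← Real.rpow_mul hB0.le]
          congr 1
          ring
  have hrp2 : ((k₂ * (n:ℝ) ^ 2) : ℝ) ^ (ε/2) ≤ k₂ ^ (ε/2) * B ^ ε := by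
    have h1 : (k₂ * (n:ℝ) ^ 2) ≤ k₂ * B ^ 2 := by
      have : (n:ℝ)^2 ≤ B^2 := by nlinarith
      have hk : (0:ℝ) ≤ k₂ := Nat.cast_nonneg _
      nlinarith
    calc ((k₂ * (n:ℝ) ^ 2) : ℝ) ^ (ε/2) ≤ (k₂ * B ^ 2) ^ (ε/2) := by
          apply Real.rpow_le_rpow (by positivity) h1 (by linarith)
      _ = k₂ ^ (ε/2) * (B ^ 2) ^ (ε/2) := Real.mul_rpow (Nat.cast_nonneg _) (by positivity)
      _ = k₂ ^ (ε/2) * B ^ ε := by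
          congr 1
          rw [← hB2, ← Real.rpow_mul hB0.le]
          congr 1
          ring
  -- final chain
  have hU1R : (U₁.card : ℝ) ≤ 36 * B ^ ((2:ℝ) + ε) + 18 * C₀ * k₀ ^ (ε/2) * B ^ ((2:ℝ) + ε) := by
    refine hPC1.trans ?_
    have e1 : (2 * (2 * (n:ℝ) + 1)) ^ 2 ≤ 36 * B ^ ((2:ℝ) + ε) := by
      have hmono' : B ^ (2:ℕ) ≤ B ^ ((2:ℝ) + ε) := by rw [← hB2]; exact hmono
      have hx : (0:ℝ) ≤ 2 * (2 * (n:ℝ) + 1) := by positivity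
      have h1 : (2 * (2 * (n:ℝ) + 1)) ^ 2 ≤ (6 * B) ^ 2 :=
        pow_le_pow_left₀ hx (by linarith) 2
      have h2 : (6 * B) ^ 2 = 36 * B ^ (2:ℕ) := by ring
      calc (2 * (2 * (n:ℝ) + 1)) ^ 2 ≤ 36 * B ^ (2:ℕ) := by rw [← h2]; exact h1
        _ ≤ 36 * B ^ ((2:ℝ) + ε) := by linarith only [hmono']
    have e2 : (2 * (n:ℝ) + 1) ^ 2 * (2 * C₀ * ((k₀ * (n:ℝ) ^ 2) : ℝ) ^ (ε/2))
        ≤ 18 * C₀ * k₀ ^ (ε/2) * B ^ ((2:ℝ) + ε) := by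
      have h3 : (2 * (n:ℝ) + 1) ^ 2 ≤ 9 * B ^ 2 := by nlinarith
      have h4 : (0:ℝ) ≤ (2 * (n:ℝ) + 1) ^ 2 := by positivity
      have h5 : (0:ℝ) ≤ 2 * C₀ := by linarith
      have h6 : (0:ℝ) ≤ ((k₀ * (n:ℝ) ^ 2) : ℝ) ^ (ε/2) := by positivity
      calc (2 * (n:ℝ) + 1) ^ 2 * (2 * C₀ * ((k₀ * (n:ℝ) ^ 2) : ℝ) ^ (ε/2))
          ≤ (9 * B ^ 2) * (2 * C₀ * (k₀ ^ (ε/2) * B ^ ε)) := by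
            apply mul_le_mul h3 (by nlinarith [hrp1]) (by positivity) (by positivity)
        _ = 18 * C₀ * k₀ ^ (ε/2) * (B ^ 2 * B ^ ε) := by ring
        _ = 18 * C₀ * k₀ ^ (ε/2) * B ^ ((2:ℝ) + ε) := by
            rw [← hB2, hBsq]
    linarith
  have hU2R : (U₂.card : ℝ) ≤ 36 * B ^ ((2:ℝ) + ε) + 18 * C₀ * k₂ ^ (ε/2) * B ^ ((2:ℝ) + ε) := by
    refine hPC2.trans ?_
    have e1 : (2 * (2 * (n:ℝ) + 1)) ^ 2 ≤ 36 * B ^ ((2:ℝ) + ε) := by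
      have hmono' : B ^ (2:ℕ) ≤ B ^ ((2:ℝ) + ε) := by rw [← hB2]; exact hmono
      have hx : (0:ℝ) ≤ 2 * (2 * (n:ℝ) + 1) := by positivity
      have h1 : (2 * (2 * (n:ℝ) + 1)) ^ 2 ≤ (6 * B) ^ 2 :=
        pow_le_pow_left₀ hx (by linarith) 2
      have h2 : (6 * B) ^ 2 = 36 * B ^ (2:ℕ) := by ring
      calc (2 * (2 * (n:ℝ) + 1)) ^ 2 ≤ 36 * B ^ (2:ℕ) := by rw [← h2]; exact h1
        _ ≤ 36 * B ^ ((2:ℝ) + ε) := by linarith only [hmono']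
    have e2 : (2 * (n:ℝ) + 1) ^ 2 * (2 * C₀ * ((k₂ * (n:ℝ) ^ 2) : ℝ) ^ (ε/2))
        ≤ 18 * C₀ * k₂ ^ (ε/2) * B ^ ((2:ℝ) + ε) := by
      have h3 : (2 * (n:ℝ) + 1) ^ 2 ≤ 9 * B ^ 2 := by nlinarith
      have h5 : (0:ℝ) ≤ 2 * C₀ := by linarith
      calc (2 * (n:ℝ) + 1) ^ 2 * (2 * C₀ * ((k₂ * (n:ℝ) ^ 2) : ℝ) ^ (ε/2))
          ≤ (9 * B ^ 2) * (2 * C₀ * (k₂ ^ (ε/2) * B ^ ε)) := by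
            apply mul_le_mul h3 (by nlinarith [hrp2]) (by positivity) (by positivity)
        _ = 18 * C₀ * k₂ ^ (ε/2) * (B ^ 2 * B ^ ε) := by ring
        _ = 18 * C₀ * k₂ ^ (ε/2) * B ^ ((2:ℝ) + ε) := by
            rw [← hB2, hBsq]
    linarith
  have hTR : (2:ℝ) * (T.card : ℝ) ≤ (U₁.card : ℝ) + (U₂.card : ℝ) := by exact_mod_cast h2T
  have hSR : (S'.card : ℝ) ≤ (T.card : ℝ) := by exact_mod_cast hST
  calc (S'.card : ℝ) ≤ ((U₁.card : ℝ) + (U₂.card : ℝ)) / 2 := by linarith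
    _ ≤ (36 * B ^ ((2:ℝ) + ε) + 18 * C₀ * k₀ ^ (ε/2) * B ^ ((2:ℝ) + ε)
        + (36 * B ^ ((2:ℝ) + ε) + 18 * C₀ * k₂ ^ (ε/2) * B ^ ((2:ℝ) + ε))) / 2 := by linarith
    _ = (36 + 9 * C₀ * (k₀ ^ (ε/2) + k₂ ^ (ε/2))) * B ^ ((2:ℝ) + ε) := by ring
end

section
/- Let a₁,a₂,a₃,a₄,b₁,b₂,b₃,b₄ be nonzero integers, ψ₁(x)=Σaᵢxᵢ², ψ₂(x)=Σbᵢxᵢ². Let q=q₁q₂ and c=c₁c₂ be positive integers with q₁, q₂ odd and gcd(q₁c₁, q₂c₂)=1. Then for every w∈ℤ⁴, S_{q,c}(w) = S_{q₁,c₁}(w)·S_{q₂,c₂}(w). -/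
open scoped Classical

/-- `ψ(c, x) = c₁x₁² + c₂x₂² + c₃x₃² + c₄x₄²` for a diagonal quaternary quadratic form. -/
def psi (c : Fin 4 → ℤ) (x : Fin 4 → ℤ) : ℤ := ∑ i, c i * x i ^ 2

/-- The character sum
`S_{q,c}(w) = Σ*_{a mod c} Σ_{k mod qc, ψ₁(k)≡0 mod q} χ_q(ψ₂(k)) e((aψ₁(k)+w·k)/(qc))`,
where `χ_q` is the Jacobi symbol mod `q` and `e(t) = exp(2πit)`. -/
noncomputable def S (a b : Fin 4 → ℤ) (q c : ℕ) (w : Fin 4 → ℤ) : ℂ :=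
  ∑ x ∈ (Finset.range c).filter (fun x => Nat.Coprime x c),
    ∑ k ∈ (Fintype.piFinset fun _ : Fin 4 => Finset.range (q * c)).filter
        (fun k => (q : ℤ) ∣ psi a (fun i => (k i : ℤ))),
      (jacobiSym (psi b (fun i => (k i : ℤ))) q : ℂ) *
        Complex.exp (2 * (Real.pi : ℂ) * Complex.I *
          (((x : ℂ) * ((psi a (fun i => (k i : ℤ)) : ℤ) : ℂ) + ∑ i, (w i : ℂ) * (k i : ℂ))
            / ((q : ℂ) * (c : ℂ))))


noncomputable def E (N : ℕ) (z : ℤ) : ℂ :=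
  Complex.exp (2 * (Real.pi : ℂ) * Complex.I * ((z : ℂ) / (N : ℂ)))


lemma E_congr {N : ℕ} (hN : N ≠ 0) {z z' : ℤ} (h : (N : ℤ) ∣ z - z') : E N z = E N z' := by
  obtain ⟨t, ht⟩ := h
  have hz : z = z' + N * t := by linarith
  have hNC : (N : ℂ) ≠ 0 := Nat.cast_ne_zero.mpr hN
  rw [E, E, hz]
  push_cast
  rw [show 2 * (Real.pi : ℂ) * Complex.I * (((z' : ℂ) + N * t) / N)
      = 2 * (Real.pi : ℂ) * Complex.I * ((z' : ℂ) / N) + (t : ℂ) * (2 * Real.pi * Complex.I) by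
    field_simp]
  rw [Complex.exp_add, Complex.exp_int_mul_two_pi_mul_I, mul_one]


lemma E_split {N₁ N₂ : ℕ} (h₁ : N₁ ≠ 0) (h₂ : N₂ ≠ 0) (z₁ z₂ : ℤ) :
    E (N₁ * N₂) (z₁ * N₂ + z₂ * N₁) = E N₁ z₁ * E N₂ z₂ := by
  have h₁C : (N₁ : ℂ) ≠ 0 := Nat.cast_ne_zero.mpr h₁
  have h₂C : (N₂ : ℂ) ≠ 0 := Nat.cast_ne_zero.mpr h₂
  rw [E, E, E, ← Complex.exp_add]
  congr 1
  push_cast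
  field_simp


lemma psi_modEq {n : ℤ} (a : Fin 4 → ℤ) {k k' : Fin 4 → ℤ} (h : ∀ i, k i ≡ k' i [ZMOD n]) :
    psi a k ≡ psi a k' [ZMOD n] := by
  simp only [psi, Fin.sum_univ_four]
  exact ((((h 0).pow 2).mul_left _).add (((h 1).pow 2).mul_left _)).add
    (((h 2).pow 2).mul_left _) |>.add (((h 3).pow 2).mul_left _)


noncomputable def term (a b : Fin 4 → ℤ) (q c : ℕ) (w : Fin 4 → ℤ) (x : ℕ) (k : Fin 4 → ℕ) : ℂ :=
  if (q : ℤ) ∣ psi a (fun i => (k i : ℤ)) then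
    (jacobiSym (psi b (fun i => (k i : ℤ))) q : ℂ) *
      E (q * c) ((x : ℤ) * psi a (fun i => (k i : ℤ)) + ∑ i, w i * (k i : ℤ))
  else 0


lemma S_eq (a b : Fin 4 → ℤ) (q c : ℕ) (w : Fin 4 → ℤ) :
    S a b q c w = ∑ p ∈ ((Finset.range c).filter (fun x => Nat.Coprime x c)) ×ˢ
      (Fintype.piFinset fun _ : Fin 4 => Finset.range (q * c)),
      term a b q c w p.1 p.2 := by
  rw [Finset.sum_product, S]
  refine Finset.sum_congr rfl fun x hx => ?_
  rw [Finset.sum_filter]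
  refine Finset.sum_congr rfl fun k hk => ?_
  unfold term E
  split_ifs with h
  · congr 2
    push_cast
    ring
  · rfl


lemma term_congr (a b : Fin 4 → ℤ) {q c : ℕ} (hqc : q * c ≠ 0) (w : Fin 4 → ℤ) (x : ℕ)
    {k k' : Fin 4 → ℕ} (h : ∀ i, (k i : ℤ) ≡ (k' i : ℤ) [ZMOD (q * c : ℕ)]) :
    term a b q c w x k = term a b q c w x k' := by
  have hq : ((q : ℤ)) ∣ ((q * c : ℕ) : ℤ) := by push_cast; exact dvd_mul_right _ _
  have hmod : ∀ i, (k i : ℤ) ≡ (k' i : ℤ) [ZMOD (q : ℤ)] := fun i => (h i).of_dvd hq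
  have hpa : psi a (fun i => (k i : ℤ)) ≡ psi a (fun i => (k' i : ℤ)) [ZMOD (q : ℤ)] :=
    psi_modEq a hmod
  have hpb : psi b (fun i => (k i : ℤ)) ≡ psi b (fun i => (k' i : ℤ)) [ZMOD (q : ℤ)] :=
    psi_modEq b hmod
  have hsub := Int.ModEq.dvd hpa
  have hdvd : ((q : ℤ) ∣ psi a (fun i => (k i : ℤ))) ↔ ((q : ℤ) ∣ psi a (fun i => (k' i : ℤ))) := by
    constructor
    · intro hd
      have := dvd_add hsub hd
      rwa [sub_add_cancel] at this
    · intro hd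
      have := dvd_sub hd hsub
      rwa [sub_sub_cancel] at this
  have hjac : jacobiSym (psi b (fun i => (k i : ℤ))) q
      = jacobiSym (psi b (fun i => (k' i : ℤ))) q := jacobiSym.mod_left' hpb
  have hE : E (q * c) ((x : ℤ) * psi a (fun i => (k i : ℤ)) + ∑ i, w i * (k i : ℤ))
      = E (q * c) ((x : ℤ) * psi a (fun i => (k' i : ℤ)) + ∑ i, w i * (k' i : ℤ)) := by
    refine E_congr hqc ?_
    have hpa' : psi a (fun i => (k i : ℤ)) ≡ psi a (fun i => (k' i : ℤ)) [ZMOD ((q*c : ℕ) : ℤ)] :=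
      psi_modEq a h
    have hsum : (∑ i, w i * (k i : ℤ)) ≡ (∑ i, w i * (k' i : ℤ)) [ZMOD ((q*c : ℕ) : ℤ)] := by
      simp only [Fin.sum_univ_four]
      exact ((((h 0).mul_left _).add ((h 1).mul_left _)).add ((h 2).mul_left _)).add
        ((h 3).mul_left _)
    have : ((x : ℤ) * psi a (fun i => (k i : ℤ)) + ∑ i, w i * (k i : ℤ))
        ≡ ((x : ℤ) * psi a (fun i => (k' i : ℤ)) + ∑ i, w i * (k' i : ℤ)) [ZMOD ((q*c : ℕ) : ℤ)] :=
      (hpa'.mul_left _).add hsum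
    exact this.symm.dvd
  unfold term
  rw [hjac, hE]
  simp only [hdvd]


lemma term_mul (a b : Fin 4 → ℤ) (q₁ q₂ c₁ c₂ : ℕ) (hq₁ : 0 < q₁) (hq₂ : 0 < q₂)
    (hc₁ : 0 < c₁) (hc₂ : 0 < c₂) (hcop : Nat.Coprime (q₁ * c₁) (q₂ * c₂)) (w : Fin 4 → ℤ)
    (x₁ x₂ X : ℕ) (k₁ k₂ : Fin 4 → ℕ)
    (hX1 : X * (q₂ * c₂) ≡ x₁ [MOD c₁]) (hX2 : X * (q₁ * c₁) ≡ x₂ [MOD c₂]) :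
    term a b (q₁ * q₂) (c₁ * c₂) w X (fun i => k₁ i * (q₂ * c₂) + k₂ i * (q₁ * c₁))
      = term a b q₁ c₁ w x₁ k₁ * term a b q₂ c₂ w x₂ k₂ := by
  have hN₁0 : q₁ * c₁ ≠ 0 := by positivity
  have hN₂0 : q₂ * c₂ ≠ 0 := by positivity
  have hq₁N₂ : Nat.Coprime q₁ (q₂ * c₂) := Nat.Coprime.coprime_dvd_left (dvd_mul_right q₁ c₁) hcop
  have hq₂N₁ : Nat.Coprime q₂ (q₁ * c₁) :=
    Nat.Coprime.coprime_dvd_left (dvd_mul_right q₂ c₂) hcop.symm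
  have hqq : Nat.Coprime q₁ q₂ := Nat.Coprime.coprime_dvd_right (dvd_mul_right q₂ c₂) hq₁N₂
  have hpa : psi a (fun i => ((k₁ i * (q₂ * c₂) + k₂ i * (q₁ * c₁) : ℕ) : ℤ)) = ((q₂ * c₂ : ℕ) : ℤ)^2 * psi a (fun i => ((k₁ i : ℕ) : ℤ)) + ((q₁ * c₁ : ℕ) : ℤ)^2 * psi a (fun i => ((k₂ i : ℕ) : ℤ)) + ((q₁ * c₁ : ℕ) : ℤ) * ((q₂ * c₂ : ℕ) : ℤ) * (2 * (∑ i, a i * (k₁ i : ℤ) * (k₂ i : ℤ))) := by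
    simp only [psi, Fin.sum_univ_four]; push_cast; ring
  have hpb : psi b (fun i => ((k₁ i * (q₂ * c₂) + k₂ i * (q₁ * c₁) : ℕ) : ℤ)) = ((q₂ * c₂ : ℕ) : ℤ)^2 * psi b (fun i => ((k₁ i : ℕ) : ℤ)) + ((q₁ * c₁ : ℕ) : ℤ)^2 * psi b (fun i => ((k₂ i : ℕ) : ℤ)) + ((q₁ * c₁ : ℕ) : ℤ) * ((q₂ * c₂ : ℕ) : ℤ) * (2 * (∑ i, b i * (k₁ i : ℤ) * (k₂ i : ℤ))) := by
    simp only [psi, Fin.sum_univ_four]; push_cast; ring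
  have hdq₁N₁ : (q₁:ℤ) ∣ ((q₁ * c₁ : ℕ) : ℤ) := Int.natCast_dvd_natCast.mpr (dvd_mul_right q₁ c₁)
  have hdq₂N₂ : (q₂:ℤ) ∣ ((q₂ * c₂ : ℕ) : ℤ) := Int.natCast_dvd_natCast.mpr (dvd_mul_right q₂ c₂)
  have hmod_a1 : psi a (fun i => ((k₁ i * (q₂ * c₂) + k₂ i * (q₁ * c₁) : ℕ) : ℤ)) ≡ ((q₂ * c₂ : ℕ) : ℤ)^2 * psi a (fun i => ((k₁ i : ℕ) : ℤ)) [ZMOD (q₁:ℤ)] := by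
    rw [Int.modEq_iff_dvd, hpa]
    have hrw : ((q₂ * c₂ : ℕ) : ℤ)^2 * psi a (fun i => ((k₁ i : ℕ) : ℤ)) - (((q₂ * c₂ : ℕ) : ℤ)^2 * psi a (fun i => ((k₁ i : ℕ) : ℤ)) + ((q₁ * c₁ : ℕ) : ℤ)^2 * psi a (fun i => ((k₂ i : ℕ) : ℤ)) + ((q₁ * c₁ : ℕ) : ℤ) * ((q₂ * c₂ : ℕ) : ℤ) * (2 * (∑ i, a i * (k₁ i : ℤ) * (k₂ i : ℤ))))
        = ((q₁ * c₁ : ℕ) : ℤ) * (-(((q₁ * c₁ : ℕ) : ℤ) * psi a (fun i => ((k₂ i : ℕ) : ℤ))) - ((q₂ * c₂ : ℕ) : ℤ) * (2 * (∑ i, a i * (k₁ i : ℤ) * (k₂ i : ℤ)))) := by ring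
    rw [hrw]; exact Dvd.dvd.mul_right hdq₁N₁ _
  have hmod_a2 : psi a (fun i => ((k₁ i * (q₂ * c₂) + k₂ i * (q₁ * c₁) : ℕ) : ℤ)) ≡ ((q₁ * c₁ : ℕ) : ℤ)^2 * psi a (fun i => ((k₂ i : ℕ) : ℤ)) [ZMOD (q₂:ℤ)] := by
    rw [Int.modEq_iff_dvd, hpa]
    have hrw : ((q₁ * c₁ : ℕ) : ℤ)^2 * psi a (fun i => ((k₂ i : ℕ) : ℤ)) - (((q₂ * c₂ : ℕ) : ℤ)^2 * psi a (fun i => ((k₁ i : ℕ) : ℤ)) + ((q₁ * c₁ : ℕ) : ℤ)^2 * psi a (fun i => ((k₂ i : ℕ) : ℤ)) + ((q₁ * c₁ : ℕ) : ℤ) * ((q₂ * c₂ : ℕ) : ℤ) * (2 * (∑ i, a i * (k₁ i : ℤ) * (k₂ i : ℤ))))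
        = ((q₂ * c₂ : ℕ) : ℤ) * (-(((q₂ * c₂ : ℕ) : ℤ) * psi a (fun i => ((k₁ i : ℕ) : ℤ))) - ((q₁ * c₁ : ℕ) : ℤ) * (2 * (∑ i, a i * (k₁ i : ℤ) * (k₂ i : ℤ)))) := by ring
    rw [hrw]; exact Dvd.dvd.mul_right hdq₂N₂ _
  have hmod_b1 : psi b (fun i => ((k₁ i * (q₂ * c₂) + k₂ i * (q₁ * c₁) : ℕ) : ℤ)) ≡ ((q₂ * c₂ : ℕ) : ℤ)^2 * psi b (fun i => ((k₁ i : ℕ) : ℤ)) [ZMOD (q₁:ℤ)] := by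
    rw [Int.modEq_iff_dvd, hpb]
    have hrw : ((q₂ * c₂ : ℕ) : ℤ)^2 * psi b (fun i => ((k₁ i : ℕ) : ℤ)) - (((q₂ * c₂ : ℕ) : ℤ)^2 * psi b (fun i => ((k₁ i : ℕ) : ℤ)) + ((q₁ * c₁ : ℕ) : ℤ)^2 * psi b (fun i => ((k₂ i : ℕ) : ℤ)) + ((q₁ * c₁ : ℕ) : ℤ) * ((q₂ * c₂ : ℕ) : ℤ) * (2 * (∑ i, b i * (k₁ i : ℤ) * (k₂ i : ℤ))))
        = ((q₁ * c₁ : ℕ) : ℤ) * (-(((q₁ * c₁ : ℕ) : ℤ) * psi b (fun i => ((k₂ i : ℕ) : ℤ))) - ((q₂ * c₂ : ℕ) : ℤ) * (2 * (∑ i, b i * (k₁ i : ℤ) * (k₂ i : ℤ)))) := by ring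
    rw [hrw]; exact Dvd.dvd.mul_right hdq₁N₁ _
  have hmod_b2 : psi b (fun i => ((k₁ i * (q₂ * c₂) + k₂ i * (q₁ * c₁) : ℕ) : ℤ)) ≡ ((q₁ * c₁ : ℕ) : ℤ)^2 * psi b (fun i => ((k₂ i : ℕ) : ℤ)) [ZMOD (q₂:ℤ)] := by
    rw [Int.modEq_iff_dvd, hpb]
    have hrw : ((q₁ * c₁ : ℕ) : ℤ)^2 * psi b (fun i => ((k₂ i : ℕ) : ℤ)) - (((q₂ * c₂ : ℕ) : ℤ)^2 * psi b (fun i => ((k₁ i : ℕ) : ℤ)) + ((q₁ * c₁ : ℕ) : ℤ)^2 * psi b (fun i => ((k₂ i : ℕ) : ℤ)) + ((q₁ * c₁ : ℕ) : ℤ) * ((q₂ * c₂ : ℕ) : ℤ) * (2 * (∑ i, b i * (k₁ i : ℤ) * (k₂ i : ℤ))))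
        = ((q₂ * c₂ : ℕ) : ℤ) * (-(((q₂ * c₂ : ℕ) : ℤ) * psi b (fun i => ((k₁ i : ℕ) : ℤ))) - ((q₁ * c₁ : ℕ) : ℤ) * (2 * (∑ i, b i * (k₁ i : ℤ) * (k₂ i : ℤ)))) := by ring
    rw [hrw]; exact Dvd.dvd.mul_right hdq₂N₂ _
  have hco1 : IsCoprime (q₁:ℤ) ((((q₂ * c₂ : ℕ) : ℤ))^2) := (Nat.Coprime.isCoprime hq₁N₂).pow_right
  have hco2 : IsCoprime (q₂:ℤ) ((((q₁ * c₁ : ℕ) : ℤ))^2) := (Nat.Coprime.isCoprime hq₂N₁).pow_right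
  have he1 : (q₁:ℤ) ∣ psi a (fun i => ((k₁ i * (q₂ * c₂) + k₂ i * (q₁ * c₁) : ℕ) : ℤ)) ↔ (q₁:ℤ) ∣ psi a (fun i => ((k₁ i : ℕ) : ℤ)) := by
    constructor
    · intro h
      have h' : (q₁:ℤ) ∣ ((q₂ * c₂ : ℕ) : ℤ)^2 * psi a (fun i => ((k₁ i : ℕ) : ℤ)) := by
        have h2 := dvd_add h hmod_a1.dvd
        rwa [add_sub_cancel] at h2
      exact hco1.dvd_of_dvd_mul_left h'
    · intro h
      have h' : (q₁:ℤ) ∣ ((q₂ * c₂ : ℕ) : ℤ)^2 * psi a (fun i => ((k₁ i : ℕ) : ℤ)) := Dvd.dvd.mul_left h _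
      have h2 := dvd_add h' hmod_a1.symm.dvd
      rwa [add_sub_cancel] at h2
  have he2 : (q₂:ℤ) ∣ psi a (fun i => ((k₁ i * (q₂ * c₂) + k₂ i * (q₁ * c₁) : ℕ) : ℤ)) ↔ (q₂:ℤ) ∣ psi a (fun i => ((k₂ i : ℕ) : ℤ)) := by
    constructor
    · intro h
      have h' : (q₂:ℤ) ∣ ((q₁ * c₁ : ℕ) : ℤ)^2 * psi a (fun i => ((k₂ i : ℕ) : ℤ)) := by
        have h2 := dvd_add h hmod_a2.dvd
        rwa [add_sub_cancel] at h2
      exact hco2.dvd_of_dvd_mul_left h'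
    · intro h
      have h' : (q₂:ℤ) ∣ ((q₁ * c₁ : ℕ) : ℤ)^2 * psi a (fun i => ((k₂ i : ℕ) : ℤ)) := Dvd.dvd.mul_left h _
      have h2 := dvd_add h' hmod_a2.symm.dvd
      rwa [add_sub_cancel] at h2
  have hdvd : ((q₁ * q₂ : ℕ):ℤ) ∣ psi a (fun i => ((k₁ i * (q₂ * c₂) + k₂ i * (q₁ * c₁) : ℕ) : ℤ)) ↔ ((q₁:ℤ) ∣ psi a (fun i => ((k₁ i : ℕ) : ℤ)) ∧ (q₂:ℤ) ∣ psi a (fun i => ((k₂ i : ℕ) : ℤ))) := by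
    push_cast
    constructor
    · intro h
      exact ⟨he1.mp (dvd_trans (dvd_mul_right _ _) h), he2.mp (dvd_trans (dvd_mul_left _ _) h)⟩
    · rintro ⟨h1, h2⟩
      exact (Nat.Coprime.isCoprime hqq).mul_dvd (he1.mpr h1) (he2.mpr h2)
  have hjac : (jacobiSym (psi b (fun i => ((k₁ i * (q₂ * c₂) + k₂ i * (q₁ * c₁) : ℕ) : ℤ))) (q₁ * q₂) : ℤ)
      = jacobiSym (psi b (fun i => ((k₁ i : ℕ) : ℤ))) q₁ * jacobiSym (psi b (fun i => ((k₂ i : ℕ) : ℤ))) q₂ := by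
    rw [jacobiSym.mul_right' _ hq₁.ne' hq₂.ne']
    have hj1 : jacobiSym (psi b (fun i => ((k₁ i * (q₂ * c₂) + k₂ i * (q₁ * c₁) : ℕ) : ℤ))) q₁ = jacobiSym (psi b (fun i => ((k₁ i : ℕ) : ℤ))) q₁ := by
      rw [jacobiSym.mod_left' hmod_b1, jacobiSym.mul_left, jacobiSym.sq_one'
        (by rw [Int.gcd_natCast_natCast]; exact hq₁N₂.symm), one_mul]
    have hj2 : jacobiSym (psi b (fun i => ((k₁ i * (q₂ * c₂) + k₂ i * (q₁ * c₁) : ℕ) : ℤ))) q₂ = jacobiSym (psi b (fun i => ((k₂ i : ℕ) : ℤ))) q₂ := by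
      rw [jacobiSym.mod_left' hmod_b2, jacobiSym.mul_left, jacobiSym.sq_one'
        (by rw [Int.gcd_natCast_natCast]; exact hq₂N₁.symm), one_mul]
    rw [hj1, hj2]
  simp only [term]
  by_cases hd1 : (q₁:ℤ) ∣ psi a (fun i => ((k₁ i : ℕ) : ℤ))
  · by_cases hd2 : (q₂:ℤ) ∣ psi a (fun i => ((k₂ i : ℕ) : ℤ))
    · rw [if_pos hd1, if_pos hd2, if_pos (hdvd.mpr ⟨hd1, hd2⟩)]
      obtain ⟨m₁, hm₁⟩ := hd1
      obtain ⟨m₂, hm₂⟩ := hd2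
      have hu1 : ((c₁:ℕ):ℤ) ∣ ((X:ℤ) * (q₂ * c₂ : ℕ) - (x₁:ℤ)) := by
        have h := hX1.dvd
        have hrw : (X:ℤ) * ((q₂ * c₂ : ℕ) : ℤ) - (x₁:ℤ) = -(((x₁:ℕ):ℤ) - ((X * (q₂ * c₂) : ℕ):ℤ)) := by
          push_cast; ring
        rw [hrw]
        exact dvd_neg.mpr h
      have hu2 : ((c₂:ℕ):ℤ) ∣ ((X:ℤ) * (q₁ * c₁ : ℕ) - (x₂:ℤ)) := by
        have h := hX2.dvd
        have hrw : (X:ℤ) * ((q₁ * c₁ : ℕ) : ℤ) - (x₂:ℤ) = -(((x₂:ℕ):ℤ) - ((X * (q₁ * c₁) : ℕ):ℤ)) := by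
          push_cast; ring
        rw [hrw]
        exact dvd_neg.mpr h
      obtain ⟨u, hu⟩ := hu1
      obtain ⟨v, hv⟩ := hu2
      have hwK : (∑ i, w i * ((k₁ i * (q₂ * c₂) + k₂ i * (q₁ * c₁) : ℕ) : ℤ))
          = (∑ i, w i * ((k₁ i : ℕ) : ℤ)) * ((q₂ * c₂ : ℕ) : ℤ) + (∑ i, w i * ((k₂ i : ℕ) : ℤ)) * ((q₁ * c₁ : ℕ) : ℤ) := by
        simp only [Fin.sum_univ_four]; push_cast; ring
      have hE : E ((q₁ * q₂) * (c₁ * c₂)) ((X:ℤ) * psi a (fun i => ((k₁ i * (q₂ * c₂) + k₂ i * (q₁ * c₁) : ℕ) : ℤ)) + ∑ i, w i * ((k₁ i * (q₂ * c₂) + k₂ i * (q₁ * c₁) : ℕ) : ℤ))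
          = E (q₁ * c₁) ((x₁:ℤ) * psi a (fun i => ((k₁ i : ℕ) : ℤ)) + ∑ i, w i * ((k₁ i : ℕ) : ℤ))
            * E (q₂ * c₂) ((x₂:ℤ) * psi a (fun i => ((k₂ i : ℕ) : ℤ)) + ∑ i, w i * ((k₂ i : ℕ) : ℤ)) := by
        rw [show (q₁ * q₂) * (c₁ * c₂) = (q₁ * c₁) * (q₂ * c₂) by ring]
        rw [← E_split hN₁0 hN₂0]
        refine E_congr (by positivity) ?_
        refine ⟨m₁ * u + m₂ * v + 2 * (X:ℤ) * (∑ i, a i * (k₁ i : ℤ) * (k₂ i : ℤ)), ?_⟩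
        push_cast at hpa hwK hm₁ hm₂ hu hv ⊢
        linear_combination (X:ℤ) * hpa + hwK
          + ((q₂:ℤ) * c₂ * ((X:ℤ) * ((q₂:ℤ) * c₂) - (x₁:ℤ))) * hm₁
          + ((q₁:ℤ) * m₁ * ((q₂:ℤ) * c₂)) * hu
          + ((q₁:ℤ) * c₁ * ((X:ℤ) * ((q₁:ℤ) * c₁) - (x₂:ℤ))) * hm₂
          + ((q₂:ℤ) * m₂ * ((q₁:ℤ) * c₁)) * hv
      rw [hE]
      have hjc : ((jacobiSym (psi b (fun i => ((k₁ i * (q₂ * c₂) + k₂ i * (q₁ * c₁) : ℕ) : ℤ))) (q₁ * q₂) : ℤ) : ℂ)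
          = ((jacobiSym (psi b (fun i => ((k₁ i : ℕ) : ℤ))) q₁ : ℤ) : ℂ) * ((jacobiSym (psi b (fun i => ((k₂ i : ℕ) : ℤ))) q₂ : ℤ) : ℂ) := by
        rw [hjac]; push_cast; ring
      rw [hjc]
      ring
    · rw [if_neg hd2, mul_zero, if_neg (fun h => hd2 (hdvd.mp h).2)]
  · rw [if_neg hd1, zero_mul, if_neg (fun h => hd1 (hdvd.mp h).1)]


/-- multiplicativity: if `q = q₁q₂`, `c = c₁c₂` with `q₁, q₂` odd and
`gcd(q₁c₁, q₂c₂) = 1`, then `S_{q,c}(w) = S_{q₁,c₁}(w)·S_{q₂,c₂}(w)`. -/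
theorem stmt_9 (a b : Fin 4 → ℤ) (ha : ∀ i, a i ≠ 0) (hb : ∀ i, b i ≠ 0)
    (q₁ q₂ c₁ c₂ : ℕ) (hq₁ : 0 < q₁) (hq₂ : 0 < q₂) (hc₁ : 0 < c₁) (hc₂ : 0 < c₂)
    (hq₁odd : Odd q₁) (hq₂odd : Odd q₂)
    (hcop : Nat.Coprime (q₁ * c₁) (q₂ * c₂)) :
    ∀ w : Fin 4 → ℤ, S a b (q₁ * q₂) (c₁ * c₂) w = S a b q₁ c₁ w * S a b q₂ c₂ w := by
  intro w
  have hc₁0 : c₁ ≠ 0 := hc₁.ne'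
  have hc₂0 : c₂ ≠ 0 := hc₂.ne'
  have hN₁0 : q₁ * c₁ ≠ 0 := by positivity
  have hN₂0 : q₂ * c₂ ≠ 0 := by positivity
  have hN0 : (q₁ * c₁) * (q₂ * c₂) ≠ 0 := by positivity
  have hNpos : 0 < (q₁ * c₁) * (q₂ * c₂) := Nat.pos_of_ne_zero hN0
  haveI : NeZero (c₁ * c₂) := ⟨by positivity⟩
  haveI : NeZero c₁ := ⟨hc₁0⟩
  haveI : NeZero c₂ := ⟨hc₂0⟩
  haveI : NeZero (q₁ * c₁) := ⟨hN₁0⟩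
  haveI : NeZero (q₂ * c₂) := ⟨hN₂0⟩
  have hcc : Nat.Coprime c₁ c₂ := Nat.Coprime.coprime_dvd_left (dvd_mul_left c₁ q₁)
    (Nat.Coprime.coprime_dvd_right (dvd_mul_left c₂ q₂) hcop)
  have hN₂c₁ : Nat.Coprime (q₂ * c₂) c₁ :=
    Nat.Coprime.coprime_dvd_right (dvd_mul_left c₁ q₁) hcop.symm
  have hN₁c₂ : Nat.Coprime (q₁ * c₁) c₂ :=
    Nat.Coprime.coprime_dvd_right (dvd_mul_left c₂ q₂) hcop
  have hN₂N₁ : Nat.Coprime (q₂ * c₂) (q₁ * c₁) := hcop.symm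
  set crt := ZMod.chineseRemainder hcc with hcrtdef
  have hcrtz : ∀ z : ZMod (c₁ * c₂), crt z = (ZMod.cast z : ZMod c₁ × ZMod c₂) := fun z => rfl
  have hcrt : ∀ z : ZMod (c₁ * c₂), crt z = ((ZMod.cast z : ZMod c₁), (ZMod.cast z : ZMod c₂)) :=
    fun z => by rw [hcrtz]; exact Prod.ext (Prod.fst_zmod_cast _) (Prod.snd_zmod_cast _)
  set BigX : ℕ → ℕ → ℕ := fun x₁ x₂ =>
    (crt.symm ((x₁ : ZMod c₁) * (((q₂ * c₂ : ℕ) : ZMod c₁))⁻¹,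
      (x₂ : ZMod c₂) * (((q₁ * c₁ : ℕ) : ZMod c₂))⁻¹)).val with hBigXdef
  have hBigXcast1 : ∀ x₁ x₂ : ℕ, ((BigX x₁ x₂ : ℕ) : ZMod c₁)
      = (x₁ : ZMod c₁) * (((q₂ * c₂ : ℕ) : ZMod c₁))⁻¹ := by
    intro x₁ x₂
    simp only [hBigXdef]
    rw [ZMod.natCast_val]
    have h1 := congrArg Prod.fst (hcrt (crt.symm ((x₁ : ZMod c₁) * (((q₂ * c₂ : ℕ) : ZMod c₁))⁻¹,
      (x₂ : ZMod c₂) * (((q₁ * c₁ : ℕ) : ZMod c₂))⁻¹)))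
    rw [crt.apply_symm_apply] at h1
    exact h1.symm
  have hBigXcast2 : ∀ x₁ x₂ : ℕ, ((BigX x₁ x₂ : ℕ) : ZMod c₂)
      = (x₂ : ZMod c₂) * (((q₁ * c₁ : ℕ) : ZMod c₂))⁻¹ := by
    intro x₁ x₂
    simp only [hBigXdef]
    rw [ZMod.natCast_val]
    have h1 := congrArg Prod.snd (hcrt (crt.symm ((x₁ : ZMod c₁) * (((q₂ * c₂ : ℕ) : ZMod c₁))⁻¹,
      (x₂ : ZMod c₂) * (((q₁ * c₁ : ℕ) : ZMod c₂))⁻¹)))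
    rw [crt.apply_symm_apply] at h1
    exact h1.symm
  have hBigX1 : ∀ x₁ x₂ : ℕ, BigX x₁ x₂ * (q₂ * c₂) ≡ x₁ [MOD c₁] := by
    intro x₁ x₂
    rw [← ZMod.natCast_eq_natCast_iff, Nat.cast_mul, hBigXcast1 x₁ x₂, mul_assoc,
      mul_comm (((q₂ * c₂ : ℕ) : ZMod c₁))⁻¹ _, ZMod.coe_mul_inv_eq_one _ hN₂c₁, mul_one]
  have hBigX2 : ∀ x₁ x₂ : ℕ, BigX x₁ x₂ * (q₁ * c₁) ≡ x₂ [MOD c₂] := by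
    intro x₁ x₂
    rw [← ZMod.natCast_eq_natCast_iff, Nat.cast_mul, hBigXcast2 x₁ x₂, mul_assoc,
      mul_comm (((q₁ * c₁ : ℕ) : ZMod c₂))⁻¹ _, ZMod.coe_mul_inv_eq_one _ hN₁c₂, mul_one]
  rw [S_eq a b (q₁ * q₂) (c₁ * c₂) w, S_eq a b q₁ c₁ w, S_eq a b q₂ c₂ w,
    Finset.sum_mul_sum, ← Finset.sum_product']
  rw [show (q₁ * q₂) * (c₁ * c₂) = (q₁ * c₁) * (q₂ * c₂) from by ring]
  refine (Finset.sum_nbij'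
    (i := fun p : (ℕ × (Fin 4 → ℕ)) × (ℕ × (Fin 4 → ℕ)) =>
      ((BigX p.1.1 p.2.1,
        fun t : Fin 4 => (p.1.2 t * (q₂ * c₂) + p.2.2 t * (q₁ * c₁)) % ((q₁ * c₁) * (q₂ * c₂)))
        : ℕ × (Fin 4 → ℕ)))
    (j := fun p : ℕ × (Fin 4 → ℕ) =>
      ((p.1 * (q₂ * c₂) % c₁,
        fun t : Fin 4 => (((p.2 t : ZMod (q₁ * c₁))) * (((q₂ * c₂ : ℕ) : ZMod (q₁ * c₁)))⁻¹).val),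
       (p.1 * (q₁ * c₁) % c₂,
        fun t : Fin 4 => (((p.2 t : ZMod (q₂ * c₂))) * (((q₁ * c₁ : ℕ) : ZMod (q₂ * c₂)))⁻¹).val)))
    ?_ ?_ ?_ ?_ ?_).symm
  · -- i maps into target
    rintro ⟨⟨x₁, k₁⟩, ⟨x₂, k₂⟩⟩ hp
    simp only [Finset.mem_product, Finset.mem_filter, Finset.mem_range,
      Fintype.mem_piFinset] at hp ⊢
    obtain ⟨⟨⟨hx₁lt, hx₁cop⟩, hk₁⟩, ⟨hx₂lt, hx₂cop⟩, hk₂⟩ := hp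
    refine ⟨⟨?_, ?_⟩, fun t => Nat.mod_lt _ hNpos⟩
    · simp only [hBigXdef]; exact ZMod.val_lt _
    · rw [← ZMod.isUnit_iff_coprime]
      simp only [hBigXdef]
      rw [ZMod.natCast_zmod_val]
      refine IsUnit.map crt.symm.toRingHom ?_
      have hinv1 : IsUnit ((((q₂ * c₂ : ℕ) : ZMod c₁))⁻¹) :=
        IsUnit.of_mul_eq_one _ (by rw [mul_comm]; exact ZMod.coe_mul_inv_eq_one _ hN₂c₁)
      have hinv2 : IsUnit ((((q₁ * c₁ : ℕ) : ZMod c₂))⁻¹) :=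
        IsUnit.of_mul_eq_one _ (by rw [mul_comm]; exact ZMod.coe_mul_inv_eq_one _ hN₁c₂)
      have hu1 : IsUnit ((x₁ : ZMod c₁) * (((q₂ * c₂ : ℕ) : ZMod c₁))⁻¹) :=
        (((ZMod.isUnit_iff_coprime x₁ c₁).mpr hx₁cop)).mul hinv1
      have hu2 : IsUnit ((x₂ : ZMod c₂) * (((q₁ * c₁ : ℕ) : ZMod c₂))⁻¹) :=
        (((ZMod.isUnit_iff_coprime x₂ c₂).mpr hx₂cop)).mul hinv2
      rcases hu1.exists_right_inv with ⟨v₁, hv₁⟩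
      rcases hu2.exists_right_inv with ⟨v₂, hv₂⟩
      exact IsUnit.of_mul_eq_one (v₁, v₂) (Prod.ext hv₁ hv₂)
  · -- j maps into source
    rintro ⟨x, k⟩ hp
    simp only [Finset.mem_product, Finset.mem_filter, Finset.mem_range,
      Fintype.mem_piFinset] at hp ⊢
    obtain ⟨⟨hxlt, hxcop⟩, hk⟩ := hp
    have hxc₁ : Nat.Coprime x c₁ := Nat.Coprime.coprime_dvd_right (dvd_mul_right c₁ c₂) hxcop
    have hxc₂ : Nat.Coprime x c₂ := Nat.Coprime.coprime_dvd_right (dvd_mul_left c₂ c₁) hxcop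
    refine ⟨⟨⟨Nat.mod_lt _ hc₁, ?_⟩, fun t => ZMod.val_lt _⟩,
      ⟨⟨Nat.mod_lt _ hc₂, ?_⟩, fun t => ZMod.val_lt _⟩⟩
    · have h1 : Nat.Coprime (x * (q₂ * c₂)) c₁ := Nat.Coprime.mul hxc₁ hN₂c₁
      have h2 : Nat.gcd c₁ (x * (q₂ * c₂)) = 1 := h1.symm
      rwa [Nat.gcd_rec] at h2
    · have h1 : Nat.Coprime (x * (q₁ * c₁)) c₂ := Nat.Coprime.mul hxc₂ hN₁c₂
      have h2 : Nat.gcd c₂ (x * (q₁ * c₁)) = 1 := h1.symm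
      rwa [Nat.gcd_rec] at h2
  · -- left inverse
    rintro ⟨⟨x₁, k₁⟩, ⟨x₂, k₂⟩⟩ hp
    simp only [Finset.mem_product, Finset.mem_filter, Finset.mem_range,
      Fintype.mem_piFinset] at hp
    obtain ⟨⟨⟨hx₁lt, hx₁cop⟩, hk₁⟩, ⟨hx₂lt, hx₂cop⟩, hk₂⟩ := hp
    have hxeq1 : BigX x₁ x₂ * (q₂ * c₂) % c₁ = x₁ := by
      have h := hBigX1 x₁ x₂
      unfold Nat.ModEq at h
      rw [Nat.mod_eq_of_lt hx₁lt] at h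
      exact h
    have hxeq2 : BigX x₁ x₂ * (q₁ * c₁) % c₂ = x₂ := by
      have h := hBigX2 x₁ x₂
      unfold Nat.ModEq at h
      rw [Nat.mod_eq_of_lt hx₂lt] at h
      exact h
    have hkeq1 : ∀ t : Fin 4,
        (((((k₁ t * (q₂ * c₂) + k₂ t * (q₁ * c₁)) % ((q₁ * c₁) * (q₂ * c₂)) : ℕ)
          : ZMod (q₁ * c₁))) * (((q₂ * c₂ : ℕ) : ZMod (q₁ * c₁)))⁻¹).val = k₁ t := by
      intro t
      have hcast : (((k₁ t * (q₂ * c₂) + k₂ t * (q₁ * c₁)) % ((q₁ * c₁) * (q₂ * c₂)) : ℕ)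
          : ZMod (q₁ * c₁)) = ((k₁ t * (q₂ * c₂) + k₂ t * (q₁ * c₁) : ℕ) : ZMod (q₁ * c₁)) := by
        rw [ZMod.natCast_eq_natCast_iff]
        exact (Nat.mod_modEq _ _).of_dvd (dvd_mul_right _ _)
      rw [hcast, Nat.cast_add, Nat.cast_mul _ (q₂ * c₂), Nat.cast_mul _ (q₁ * c₁),
        ZMod.natCast_self, mul_zero, add_zero, mul_assoc,
        ZMod.coe_mul_inv_eq_one _ hN₂N₁, mul_one, ZMod.val_cast_of_lt (hk₁ t)]
    have hkeq2 : ∀ t : Fin 4,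
        (((((k₁ t * (q₂ * c₂) + k₂ t * (q₁ * c₁)) % ((q₁ * c₁) * (q₂ * c₂)) : ℕ)
          : ZMod (q₂ * c₂))) * (((q₁ * c₁ : ℕ) : ZMod (q₂ * c₂)))⁻¹).val = k₂ t := by
      intro t
      have hcast : (((k₁ t * (q₂ * c₂) + k₂ t * (q₁ * c₁)) % ((q₁ * c₁) * (q₂ * c₂)) : ℕ)
          : ZMod (q₂ * c₂)) = ((k₁ t * (q₂ * c₂) + k₂ t * (q₁ * c₁) : ℕ) : ZMod (q₂ * c₂)) := by
        rw [ZMod.natCast_eq_natCast_iff]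
        exact (Nat.mod_modEq _ _).of_dvd (dvd_mul_left _ _)
      rw [hcast, Nat.cast_add, Nat.cast_mul _ (q₂ * c₂), Nat.cast_mul _ (q₁ * c₁),
        ZMod.natCast_self, mul_zero, zero_add, mul_assoc,
        ZMod.coe_mul_inv_eq_one _ hcop, mul_one, ZMod.val_cast_of_lt (hk₂ t)]
    exact Prod.ext (Prod.ext hxeq1 (funext hkeq1)) (Prod.ext hxeq2 (funext hkeq2))
  · -- right inverse
    rintro ⟨x, k⟩ hp
    simp only [Finset.mem_product, Finset.mem_filter, Finset.mem_range,
      Fintype.mem_piFinset] at hp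
    obtain ⟨⟨hxlt, hxcop⟩, hk⟩ := hp
    have hxeq : BigX (x * (q₂ * c₂) % c₁) (x * (q₁ * c₁) % c₂) = x := by
      simp only [hBigXdef]
      have e1 : ((x * (q₂ * c₂) % c₁ : ℕ) : ZMod c₁) * (((q₂ * c₂ : ℕ) : ZMod c₁))⁻¹
          = (ZMod.cast ((x : ℕ) : ZMod (c₁ * c₂)) : ZMod c₁) := by
        rw [ZMod.natCast_mod, Nat.cast_mul, mul_assoc, ZMod.coe_mul_inv_eq_one _ hN₂c₁, mul_one]
        exact (ZMod.cast_natCast (dvd_mul_right c₁ c₂) x).symm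
      have e2 : ((x * (q₁ * c₁) % c₂ : ℕ) : ZMod c₂) * (((q₁ * c₁ : ℕ) : ZMod c₂))⁻¹
          = (ZMod.cast ((x : ℕ) : ZMod (c₁ * c₂)) : ZMod c₂) := by
        rw [ZMod.natCast_mod, Nat.cast_mul, mul_assoc, ZMod.coe_mul_inv_eq_one _ hN₁c₂, mul_one]
        exact (ZMod.cast_natCast (dvd_mul_left c₂ c₁) x).symm
      have hpair : (((x * (q₂ * c₂) % c₁ : ℕ) : ZMod c₁) * (((q₂ * c₂ : ℕ) : ZMod c₁))⁻¹,
          ((x * (q₁ * c₁) % c₂ : ℕ) : ZMod c₂) * (((q₁ * c₁ : ℕ) : ZMod c₂))⁻¹)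
          = crt ((x : ℕ) : ZMod (c₁ * c₂)) := by
        rw [hcrt]
        exact Prod.ext e1 e2
      rw [hpair, crt.symm_apply_apply, ZMod.val_cast_of_lt hxlt]
    have hkeq : ∀ t : Fin 4,
        ((((k t : ZMod (q₁ * c₁))) * (((q₂ * c₂ : ℕ) : ZMod (q₁ * c₁)))⁻¹).val * (q₂ * c₂)
          + (((k t : ZMod (q₂ * c₂))) * (((q₁ * c₁ : ℕ) : ZMod (q₂ * c₂)))⁻¹).val * (q₁ * c₁))
          % ((q₁ * c₁) * (q₂ * c₂)) = k t := by
      intro t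
      have hm : ((((k t : ZMod (q₁ * c₁))) * (((q₂ * c₂ : ℕ) : ZMod (q₁ * c₁)))⁻¹).val * (q₂ * c₂)
          + (((k t : ZMod (q₂ * c₂))) * (((q₁ * c₁ : ℕ) : ZMod (q₂ * c₂)))⁻¹).val * (q₁ * c₁))
          ≡ k t [MOD (q₁ * c₁) * (q₂ * c₂)] := by
        rw [← Nat.modEq_and_modEq_iff_modEq_mul hcop]
        constructor
        · rw [← ZMod.natCast_eq_natCast_iff, Nat.cast_add, Nat.cast_mul _ (q₂ * c₂),
            Nat.cast_mul _ (q₁ * c₁), ZMod.natCast_self, mul_zero, add_zero,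
            ZMod.natCast_val, ZMod.cast_id, mul_assoc,
            mul_comm (((q₂ * c₂ : ℕ) : ZMod (q₁ * c₁)))⁻¹ _,
            ZMod.coe_mul_inv_eq_one _ hN₂N₁, mul_one]
        · rw [← ZMod.natCast_eq_natCast_iff, Nat.cast_add, Nat.cast_mul _ (q₂ * c₂),
            Nat.cast_mul _ (q₁ * c₁), ZMod.natCast_self, mul_zero, zero_add,
            ZMod.natCast_val, ZMod.cast_id, mul_assoc,
            mul_comm (((q₁ * c₁ : ℕ) : ZMod (q₂ * c₂)))⁻¹ _,
            ZMod.coe_mul_inv_eq_one _ hcop, mul_one]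
      unfold Nat.ModEq at hm
      rw [Nat.mod_eq_of_lt (hk t)] at hm
      exact hm
    exact Prod.ext hxeq (funext hkeq)
  · -- term equality
    rintro ⟨⟨x₁, k₁⟩, ⟨x₂, k₂⟩⟩ hp
    simp only [Finset.mem_product, Finset.mem_filter, Finset.mem_range,
      Fintype.mem_piFinset] at hp
    obtain ⟨⟨⟨hx₁lt, hx₁cop⟩, hk₁⟩, ⟨hx₂lt, hx₂cop⟩, hk₂⟩ := hp
    have step1 : term a b (q₁ * q₂) (c₁ * c₂) w (BigX x₁ x₂)
        (fun t => (k₁ t * (q₂ * c₂) + k₂ t * (q₁ * c₁)) % ((q₁ * c₁) * (q₂ * c₂)))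
        = term a b (q₁ * q₂) (c₁ * c₂) w (BigX x₁ x₂)
        (fun t => k₁ t * (q₂ * c₂) + k₂ t * (q₁ * c₁)) := by
      refine term_congr a b (by positivity) w _ (fun t => ?_)
      rw [Int.natCast_modEq_iff]
      rw [show (q₁ * q₂) * (c₁ * c₂) = (q₁ * c₁) * (q₂ * c₂) from by ring]
      exact Nat.mod_modEq _ _
    have step2 := term_mul a b q₁ q₂ c₁ c₂ hq₁ hq₂ hc₁ hc₂ hcop w x₁ x₂ (BigX x₁ x₂) k₁ k₂
      (hBigX1 x₁ x₂) (hBigX2 x₁ x₂)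
    exact (step1.trans step2).symm
end
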